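/- Let 0 < α < d < 2α and set h = 3 − d/α ∈ (1,2). Then for every measurable g : ℝ^d → [0,∞), every T > 0 and all 0 ≤ s ≤ t, T^{2−h} ∫_{ℝ^d} g(z) ( ∫_s^t e^{−T u |z|^α} du )² dz ≤ (t − s)^h ∫_{ℝ^d} g(z) |z|^{α − d} dz. -/

import Mathlib

open MeasureTheory ENNReal

lemma one_sub_exp_neg_le_rpow (x : ℝ) (hx : 0 ≤ x) (δ : ℝ) (hδ0 : 0 < δ) (hδ1 : δ ≤ 1) :
    1 - Real.exp (-x) ≤ x ^ δ := by
  rcases eq_or_lt_of_le hx with hx0 | hx0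
  · simp [← hx0, Real.zero_rpow hδ0.ne']
  rcases le_total x 1 with h1 | h1
  · have h2 : 1 - Real.exp (-x) ≤ x := by
      have := Real.add_one_le_exp (-x)
      linarith
    calc 1 - Real.exp (-x) ≤ x := h2
      _ = x ^ (1 : ℝ) := (Real.rpow_one x).symm
      _ ≤ x ^ δ := Real.rpow_le_rpow_of_exponent_ge hx0 h1 hδ1
  · have h2 : (1 : ℝ) ≤ x ^ δ := Real.one_le_rpow h1 hδ0.le
    have h3 : 0 < Real.exp (-x) := Real.exp_pos _
    linarith

theorem stmt13 (d : ℕ) (α : ℝ) (hα : 0 < α) (hαd : α < (d : ℝ)) (hd2α : (d : ℝ) < 2 * α)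
    (h : ℝ) (hdef : h = 3 - (d : ℝ) / α)
    (g : EuclideanSpace ℝ (Fin d) → ℝ) (hg : Measurable g) (hg0 : ∀ z, 0 ≤ g z)
    (T : ℝ) (hT : 0 < T) (s t : ℝ) (hs : 0 ≤ s) (hst : s ≤ t) :
    ENNReal.ofReal (T ^ (2 - h)) *
        ∫⁻ z, ENNReal.ofReal
          (g z * (∫ u in s..t, Real.exp (-(T * u * ‖z‖ ^ α))) ^ 2)
      ≤ ENNReal.ofReal ((t - s) ^ h) *
        ∫⁻ z, ENNReal.ofReal (g z * ‖z‖ ^ (α - (d : ℝ))) := by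
  -- h ∈ (1, 2)
  have hda : 1 < (d : ℝ) / α := (one_lt_div hα).mpr hαd
  have hda2 : (d : ℝ) / α < 2 := (div_lt_iff₀ hα).mpr (by linarith)
  have hh1 : 1 < h := by rw [hdef]; linarith
  have hh2 : h < 2 := by rw [hdef]; linarith
  have hts : (0 : ℝ) ≤ t - s := by linarith
  -- key pointwise bound for z ≠ 0
  have key : ∀ z : EuclideanSpace ℝ (Fin d), z ≠ 0 →
      T ^ (2 - h) * ((∫ u in s..t, Real.exp (-(T * u * ‖z‖ ^ α))) ^ 2)
        ≤ (t - s) ^ h * ‖z‖ ^ (α - (d : ℝ)) := by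
    intro z hz
    have hznorm : (0 : ℝ) < ‖z‖ := norm_pos_iff.mpr hz
    set c : ℝ := T * ‖z‖ ^ α with hc_def
    have hc : 0 < c := mul_pos hT (Real.rpow_pos_of_pos hznorm α)
    -- compute the integral
    have hIeq : (∫ u in s..t, Real.exp (-(T * u * ‖z‖ ^ α)))
        = (Real.exp (-(c * s)) - Real.exp (-(c * t))) / c := by
      have harg : ∀ u : ℝ, -(T * u * ‖z‖ ^ α) = -c * u := fun u => by
        rw [hc_def]; ring
      simp_rw [harg]
      rw [intervalIntegral.integral_comp_mul_left (fun x => Real.exp x)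
        (by simpa using hc.ne' : (-c : ℝ) ≠ 0)]
      rw [integral_exp]
      simp only [smul_eq_mul, neg_mul, inv_neg, div_eq_mul_inv]
      ring
    set I : ℝ := ∫ u in s..t, Real.exp (-(T * u * ‖z‖ ^ α)) with hI_def
    have hI0 : 0 ≤ I := by
      rw [hIeq]
      apply div_nonneg _ hc.le
      have : Real.exp (-(c * t)) ≤ Real.exp (-(c * s)) :=
        Real.exp_le_exp.mpr (by nlinarith)
      linarith
    have hx : 0 ≤ c * (t - s) := mul_nonneg hc.le hts
    have hIb : I ≤ (c * (t - s)) ^ (h / 2) / c := by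
      rw [hIeq]
      gcongr
      have e1 : Real.exp (-(c * s)) - Real.exp (-(c * t))
          = Real.exp (-(c * s)) * (1 - Real.exp (-(c * (t - s)))) := by
        rw [mul_sub, mul_one, ← Real.exp_add]
        ring_nf
      rw [e1]
      have e2 : 1 - Real.exp (-(c * (t - s))) ≤ (c * (t - s)) ^ (h / 2) :=
        one_sub_exp_neg_le_rpow _ hx (h / 2) (by linarith) (by linarith)
      have e3 : Real.exp (-(c * s)) ≤ 1 := Real.exp_le_one_iff.mpr (by nlinarith)
      have e4 : 0 ≤ 1 - Real.exp (-(c * (t - s))) := by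
        have := Real.exp_le_one_iff.mpr (neg_nonpos.mpr hx)
        linarith
      calc Real.exp (-(c * s)) * (1 - Real.exp (-(c * (t - s))))
          ≤ 1 * (1 - Real.exp (-(c * (t - s)))) :=
            mul_le_mul_of_nonneg_right e3 e4
        _ = 1 - Real.exp (-(c * (t - s))) := one_mul _
        _ ≤ (c * (t - s)) ^ (h / 2) := e2
    have hsq : I ^ 2 ≤ ((c * (t - s)) ^ (h / 2) / c) ^ 2 :=
      pow_le_pow_left₀ hI0 hIb 2
    have hc2 : (0 : ℝ) < c ^ (2 : ℕ) := pow_pos hc 2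
    have hsq2 : ((c * (t - s)) ^ (h / 2) / c) ^ 2 = c ^ (h - 2) * (t - s) ^ h := by
      have e : ((c * (t - s)) ^ (h / 2)) ^ (2 : ℕ) = (c * (t - s)) ^ h := by
        rw [← Real.rpow_natCast ((c * (t - s)) ^ (h / 2)) 2, ← Real.rpow_mul hx]
        norm_num
      rw [div_pow, e, Real.mul_rpow hc.le hts, Real.rpow_sub hc,
        show (2:ℝ) = ((2:ℕ):ℝ) by norm_num, Real.rpow_natCast]
      ring
    have hcval : c ^ (h - 2) = T ^ (h - 2) * ‖z‖ ^ (α - (d : ℝ)) := by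
      rw [hc_def, Real.mul_rpow hT.le (Real.rpow_nonneg hznorm.le α),
        ← Real.rpow_mul hznorm.le]
      congr 1
      rw [hdef]
      field_simp
      ring
    have hTT : T ^ (2 - h) * T ^ (h - 2) = 1 := by
      rw [← Real.rpow_add hT]
      norm_num
    calc T ^ (2 - h) * I ^ 2
        ≤ T ^ (2 - h) * (c ^ (h - 2) * (t - s) ^ h) := by
          apply mul_le_mul_of_nonneg_left _ (Real.rpow_nonneg hT.le _)
          rw [← hsq2]; exact hsq
      _ = (T ^ (2 - h) * T ^ (h - 2)) * (‖z‖ ^ (α - (d : ℝ)) * (t - s) ^ h) := by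
          rw [hcval]; ring
      _ = (t - s) ^ h * ‖z‖ ^ (α - (d : ℝ)) := by rw [hTT]; ring
  -- pass to lintegrals
  have hd1 : 0 < d := by
    by_contra hd0
    push_neg at hd0
    interval_cases d
    simp at hαd
    linarith
  haveI : Nontrivial (EuclideanSpace ℝ (Fin d)) := by
    refine ⟨⟨EuclideanSpace.single ⟨0, hd1⟩ (1 : ℝ), 0, fun heq => ?_⟩⟩
    have := congrArg (fun v : EuclideanSpace ℝ (Fin d) => v ⟨0, hd1⟩) heq
    simp [EuclideanSpace.single_apply] at this
  have hae : ∀ᵐ z : EuclideanSpace ℝ (Fin d), z ≠ 0 := by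
    rw [ae_iff]
    have : {z : EuclideanSpace ℝ (Fin d) | ¬ z ≠ 0} = {0} := by
      ext z; simp
    rw [this]
    exact measure_singleton 0
  rw [← lintegral_const_mul' _ _ ENNReal.ofReal_ne_top,
    ← lintegral_const_mul' _ _ ENNReal.ofReal_ne_top]
  apply lintegral_mono_ae
  filter_upwards [hae] with z hz
  rw [← ENNReal.ofReal_mul (Real.rpow_nonneg hT.le _),
    ← ENNReal.ofReal_mul (Real.rpow_nonneg hts _)]
  apply ENNReal.ofReal_le_ofReal
  have := mul_le_mul_of_nonneg_left (key z hz) (hg0 z)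
  nlinarith [this]
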